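/- Let 1 ≤ r < ∞ and I = [1,2]. There is a constant C depending only on r such that for every function F : ℝ^d × I → ℂ which is continuously differentiable in t with F and ∂_t F in L^r(ℝ^d × I), ‖ sup_{t∈I} |F(·,t)| ‖_{L^r(ℝ^d)} ≤ C ( ‖F‖_{L^r(ℝ^d×I)} + ‖F‖_{L^r(ℝ^d×I)}^{(r−1)/r} ‖∂_t F‖_{L^r(ℝ^d×I)}^{1/r} ). -/

import Mathlib

open MeasureTheory Real Set Metric FourierTransform
open scoped ENNReal NNReal RealInnerProductSpace

noncomputable section

variable {d : ℕ}

/-- Fourier transform of a finite Borel measure on ℝ^d:  μ̂(ξ) = ∫ e^{−2πi x·ξ} dμ(x). -/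
def mFT (μ : Measure (EuclideanSpace ℝ (Fin d))) (ξ : EuclideanSpace ℝ (Fin d)) : ℂ :=
  ∫ x, Complex.exp (-(2 * (π : ℂ) * Complex.I * ((⟪x, ξ⟫ : ℝ) : ℂ))) ∂μ

/-- Convolution with the dilated measure: (f ∗ μ_t)(x) = ∫ f(x − t y) dμ(y). -/
def convM (f : EuclideanSpace ℝ (Fin d) → ℂ) (μ : Measure (EuclideanSpace ℝ (Fin d)))
    (t : ℝ) (x : EuclideanSpace ℝ (Fin d)) : ℂ :=
  ∫ y, f (x - t • y) ∂μ

/-- Global maximal function M_μ f(x) = sup_{t>0} |(f ∗ μ_t)(x)|. -/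
def Mmax (μ : Measure (EuclideanSpace ℝ (Fin d))) (f : EuclideanSpace ℝ (Fin d) → ℂ)
    (x : EuclideanSpace ℝ (Fin d)) : ℝ≥0∞ :=
  ⨆ t : {t : ℝ // 0 < t}, (‖convM f μ t x‖₊ : ℝ≥0∞)

/-- Local maximal function M_μ^{loc} f(x) = sup_{t∈[1,2]} |(f ∗ μ_t)(x)|. -/
def MmaxLoc (μ : Measure (EuclideanSpace ℝ (Fin d))) (f : EuclideanSpace ℝ (Fin d) → ℂ)
    (x : EuclideanSpace ℝ (Fin d)) : ℝ≥0∞ :=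
  ⨆ t : (Icc (1:ℝ) 2), (‖convM f μ t x‖₊ : ℝ≥0∞)

/-- L^p norm (in lintegral form) of an ℝ≥0∞-valued function on ℝ^d. -/
def lpE (g : EuclideanSpace ℝ (Fin d) → ℝ≥0∞) (p : ℝ) : ℝ≥0∞ :=
  (∫⁻ x, g x ^ p) ^ (1 / p)

/-- Weak L^q quasinorm of an ℝ≥0∞-valued function on ℝ^d. -/
def wlpE (g : EuclideanSpace ℝ (Fin d) → ℝ≥0∞) (q : ℝ) : ℝ≥0∞ :=
  ⨆ l : ℝ≥0, (l : ℝ≥0∞) * (volume {x | (l : ℝ≥0∞) < g x}) ^ (1 / q)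

/-- Lorentz L^{p,1} norm (up to a constant factor p) of a complex-valued function. -/
def lorentz1 (f : EuclideanSpace ℝ (Fin d) → ℂ) (p : ℝ) : ℝ≥0∞ :=
  ∫⁻ l in Ioi (0:ℝ), (volume {x | l < ‖f x‖}) ^ (1 / p)

/-- Lorentz L^{p,r} quasinorm of a real-valued function,
‖f‖_{p,r} = ( ∫_0^∞ (λ · d_f(λ)^{1/p})^r dλ/λ )^{1/r}. -/
def lorentzR (f : EuclideanSpace ℝ (Fin d) → ℝ) (p r : ℝ) : ℝ≥0∞ :=
  (∫⁻ l in Ioi (0:ℝ),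
      (ENNReal.ofReal l * (volume {x | l < |f x|}) ^ (1 / p)) ^ r / ENNReal.ofReal l) ^ (1 / r)

/-- Littlewood–Paley projection P_k for k ∈ ℤ: (P_k f)^(ξ) = β(2^{−k}|ξ|) f̂(ξ). -/
def Pproj (β : ℝ → ℝ) (k : ℤ) (f : EuclideanSpace ℝ (Fin d) → ℂ)
    (x : EuclideanSpace ℝ (Fin d)) : ℂ :=
  ∫ ξ, Complex.exp (2 * (π : ℂ) * Complex.I * ((⟪x, ξ⟫ : ℝ) : ℂ)) *
    ((β ((2:ℝ) ^ (-k) * ‖ξ‖) : ℝ) : ℂ) * 𝓕 f ξ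

/-- The multiplier operator T_j^t, with multiplier m_j(tξ) = μ̂(tξ) β(2^{−j}|tξ|). -/
def Tj (μ : Measure (EuclideanSpace ℝ (Fin d))) (β : ℝ → ℝ) (j : ℕ) (t : ℝ)
    (f : EuclideanSpace ℝ (Fin d) → ℂ) (x : EuclideanSpace ℝ (Fin d)) : ℂ :=
  ∫ ξ, Complex.exp (2 * (π : ℂ) * Complex.I * ((⟪x, ξ⟫ : ℝ) : ℂ)) *
    (((β ((2:ℝ) ^ (-(j:ℤ)) * ‖t • ξ‖) : ℝ) : ℂ) * mFT μ (t • ξ)) * 𝓕 f ξ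

/-- The maximal multiplier operator T_j^* f(x) = sup_{t>0} |T_j^t f(x)|. -/
def TjStar (μ : Measure (EuclideanSpace ℝ (Fin d))) (β : ℝ → ℝ) (j : ℕ)
    (f : EuclideanSpace ℝ (Fin d) → ℂ) (x : EuclideanSpace ℝ (Fin d)) : ℝ≥0∞ :=
  ⨆ t : {t : ℝ // 0 < t}, (‖Tj μ β j t f x‖₊ : ℝ≥0∞)

/-- M_j f(x) = sup_{k∈ℤ} sup_{2^{−k} ≤ t < 2^{−k+1}} |(P_{k+j} f ∗ μ_t)(x)|. -/
def Mj (μ : Measure (EuclideanSpace ℝ (Fin d))) (β : ℝ → ℝ) (j : ℕ)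
    (f : EuclideanSpace ℝ (Fin d) → ℂ) (x : EuclideanSpace ℝ (Fin d)) : ℝ≥0∞ :=
  ⨆ k : ℤ, ⨆ t : (Ico ((2:ℝ) ^ (-k)) ((2:ℝ) ^ (-k+1))),
    (‖convM (Pproj β (k + j) f) μ t x‖₊ : ℝ≥0∞)

/-- P_j(μ_t ∗ μ̄_s)(x) = ∫ e^{2πi x·ξ} β(2^{−j}|ξ|) μ̂(tξ) conj(μ̂(sξ)) dξ. -/
def Kdisp (μ : Measure (EuclideanSpace ℝ (Fin d))) (β : ℝ → ℝ) (j : ℕ) (t s : ℝ)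
    (x : EuclideanSpace ℝ (Fin d)) : ℂ :=
  ∫ ξ, Complex.exp (2 * (π : ℂ) * Complex.I * ((⟪x, ξ⟫ : ℝ) : ℂ)) *
    ((β ((2:ℝ) ^ (-(j:ℤ)) * ‖ξ‖) : ℝ) : ℂ) * (mFT μ (t • ξ) * (starRingEnd ℂ) (mFT μ (s • ξ)))

/-- Convolution of a nonnegative function with a dilated measure, valued in [0,∞]. -/
def convNN (g : EuclideanSpace ℝ (Fin d) → ℝ) (σ : Measure (EuclideanSpace ℝ (Fin d)))
    (t : ℝ) (x : EuclideanSpace ℝ (Fin d)) : ℝ≥0∞ :=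
  ∫⁻ y, ENNReal.ofReal (g (x - t • y)) ∂σ

namespace Stmt14Aux

open Filter Topology

lemma norm_rpow_eq (z : ℂ) (r : ℝ) : Complex.normSq z ^ (r / 2) = ‖z‖ ^ r := by
  rw [← Complex.sq_norm, ← Real.rpow_natCast ‖z‖ 2,
    ← Real.rpow_mul (norm_nonneg _)]
  norm_num
  congr 1
  ring

lemma ftc_bound {φ D B : ℝ → ℝ}
    (hφd : ∀ u ∈ Icc (1:ℝ) 2, HasDerivWithinAt φ (D u) (Icc (1:ℝ) 2) u)
    (hDc : ContinuousOn D (Icc (1:ℝ) 2)) (hBc : ContinuousOn B (Icc (1:ℝ) 2))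
    (hDB : ∀ u ∈ Icc (1:ℝ) 2, |D u| ≤ B u) (hBnn : ∀ u, 0 ≤ B u)
    {t s : ℝ} (ht : t ∈ Icc (1:ℝ) 2) (hs : s ∈ Icc (1:ℝ) 2) :
    φ t ≤ φ s + ∫ u in Icc (1:ℝ) 2, B u := by
  have hφc : ContinuousOn φ (Icc (1:ℝ) 2) := fun u hu => (hφd u hu).continuousWithinAt
  have hBint : IntegrableOn B (Icc (1:ℝ) 2) volume := hBc.integrableOn_compact isCompact_Icc
  have key : ∀ a b, a ∈ Icc (1:ℝ) 2 → b ∈ Icc (1:ℝ) 2 → a ≤ b →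
      |φ b - φ a| ≤ ∫ u in Icc (1:ℝ) 2, B u := by
    intro a b ha hb hab
    have hsub : Icc a b ⊆ Icc (1:ℝ) 2 := Icc_subset_Icc ha.1 hb.2
    have huicc : uIcc a b = Icc a b := uIcc_of_le hab
    have hDint : IntervalIntegrable D volume a b :=
      (hDc.mono (huicc ▸ hsub)).intervalIntegrable
    have heq : ∫ u in a..b, D u = φ b - φ a := by
      refine intervalIntegral.integral_eq_sub_of_hasDeriv_right_of_le hab
        (hφc.mono hsub) ?_ hDint
      intro u hu
      have hu' : u ∈ Ioo (1:ℝ) 2 := ⟨lt_of_le_of_lt ha.1 hu.1, lt_of_lt_of_le hu.2 hb.2⟩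
      exact ((hφd u (Ioo_subset_Icc_self hu')).hasDerivAt
        (Icc_mem_nhds hu'.1 hu'.2)).hasDerivWithinAt
    rw [← heq]
    calc |∫ u in a..b, D u| ≤ ∫ u in a..b, |D u| := by
          simpa using intervalIntegral.norm_integral_le_integral_norm (f := D) (μ := volume) hab
      _ ≤ ∫ u in a..b, B u := by
          refine intervalIntegral.integral_mono_on hab hDint.abs
            ((hBc.mono (huicc ▸ hsub)).intervalIntegrable) ?_
          exact fun u hu => hDB u (hsub hu)
      _ = ∫ u in Ioc a b, B u := intervalIntegral.integral_of_le hab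
      _ ≤ ∫ u in Icc (1:ℝ) 2, B u := by
          refine setIntegral_mono_set hBint (Filter.Eventually.of_forall hBnn) ?_
          exact HasSubset.Subset.eventuallyLE (Ioc_subset_Icc_self.trans hsub)
  rcases le_total s t with h | h
  · have h1 := key s t hs ht h
    have h2 : φ t - φ s ≤ |φ t - φ s| := le_abs_self _
    linarith
  · have h1 := key t s ht hs h
    have h2 : φ t - φ s ≤ |φ s - φ t| := by rw [abs_sub_comm]; exact le_abs_self _
    linarith

lemma core_eps {r : ℝ} (hr : 1 ≤ r) {f g : ℝ → ℂ}
    (hd : ∀ t ∈ Icc (1:ℝ) 2, HasDerivWithinAt f (g t) (Icc (1:ℝ) 2) t)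
    (hgc : ContinuousOn g (Icc (1:ℝ) 2)) {ε : ℝ} (hε : 0 < ε)
    {t s : ℝ} (ht : t ∈ Icc (1:ℝ) 2) (hs : s ∈ Icc (1:ℝ) 2) :
    (Complex.normSq (f t) + ε) ^ (r/2) ≤ (Complex.normSq (f s) + ε) ^ (r/2)
      + ∫ u in Icc (1:ℝ) 2, r * (Complex.normSq (f u) + ε) ^ ((r-1)/2) * ‖g u‖ := by
  have hfc : ContinuousOn f (Icc (1:ℝ) 2) := fun u hu => (hd u hu).continuousWithinAt
  have hNpos : ∀ u, 0 < Complex.normSq (f u) + ε :=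
    fun u => add_pos_of_nonneg_of_pos (Complex.normSq_nonneg _) hε
  have hNc : ContinuousOn (fun u => Complex.normSq (f u) + ε) (Icc (1:ℝ) 2) :=
    (Complex.continuous_normSq.comp_continuousOn hfc).add continuousOn_const
  have hfre : ContinuousOn (fun v => (f v).re) (Icc (1:ℝ) 2) :=
    Complex.continuous_re.comp_continuousOn hfc
  have hfim : ContinuousOn (fun v => (f v).im) (Icc (1:ℝ) 2) :=
    Complex.continuous_im.comp_continuousOn hfc
  have hgre : ContinuousOn (fun v => (g v).re) (Icc (1:ℝ) 2) :=
    Complex.continuous_re.comp_continuousOn hgc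
  have hgim : ContinuousOn (fun v => (g v).im) (Icc (1:ℝ) 2) :=
    Complex.continuous_im.comp_continuousOn hgc
  refine ftc_bound (φ := fun u => (Complex.normSq (f u) + ε) ^ (r/2))
    (B := fun u => r * (Complex.normSq (f u) + ε) ^ ((r-1)/2) * ‖g u‖)
    (D := fun u => r/2 * (Complex.normSq (f u) + ε) ^ (r/2 - 1) *
      ((g u).re * (f u).re + (f u).re * (g u).re +
        ((g u).im * (f u).im + (f u).im * (g u).im)))
    ?_ ?_ ?_ ?_ ?_ ht hs
  · -- derivative
    intro u hu
    have hre : HasDerivWithinAt (fun v => (f v).re) ((g u).re) (Icc (1:ℝ) 2) u :=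
      Complex.reCLM.hasFDerivAt.comp_hasDerivWithinAt u (hd u hu)
    have him : HasDerivWithinAt (fun v => (f v).im) ((g u).im) (Icc (1:ℝ) 2) u :=
      Complex.imCLM.hasFDerivAt.comp_hasDerivWithinAt u (hd u hu)
    have hNd : HasDerivWithinAt (fun v => Complex.normSq (f v) + ε)
        ((g u).re * (f u).re + (f u).re * (g u).re +
          ((g u).im * (f u).im + (f u).im * (g u).im)) (Icc (1:ℝ) 2) u := by
      have h1 := ((hre.mul hre).add (him.mul him)).add_const ε
      have heqf : (fun v => Complex.normSq (f v) + ε)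
          = fun v => (f v).re * (f v).re + (f v).im * (f v).im + ε := by
        funext v; simp [Complex.normSq_apply]
      rw [heqf]
      exact h1
    have houter : HasDerivAt (fun y : ℝ => y ^ (r/2))
        (r/2 * (Complex.normSq (f u) + ε) ^ (r/2 - 1)) (Complex.normSq (f u) + ε) :=
      Real.hasDerivAt_rpow_const (Or.inl (hNpos u).ne')
    exact houter.comp_hasDerivWithinAt u hNd
  · -- continuity of D
    exact (continuousOn_const.mul (hNc.rpow_const fun u hu => Or.inl (hNpos u).ne')).mul
      (((hgre.mul hfre).add (hfre.mul hgre)).add ((hgim.mul hfim).add (hfim.mul hgim)))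
  · -- continuity of B
    exact (continuousOn_const.mul (hNc.rpow_const fun u hu => Or.inl (hNpos u).ne')).mul hgc.norm
  · -- |D| ≤ B
    intro u _
    have hfn : ‖f u‖ ≤ (Complex.normSq (f u) + ε) ^ ((1:ℝ)/2) := by
      have h1 : ‖f u‖ = Complex.normSq (f u) ^ ((1:ℝ)/2) := by
        rw [← Real.sqrt_eq_rpow, Complex.norm_def]
      rw [h1]
      exact Real.rpow_le_rpow (Complex.normSq_nonneg _)
        (le_add_of_nonneg_right hε.le) (by norm_num)
    have hgn : |(g u).re * (f u).re + (f u).re * (g u).re +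
        ((g u).im * (f u).im + (f u).im * (g u).im)|
        ≤ 2 * ((Complex.normSq (f u) + ε) ^ ((1:ℝ)/2) * ‖g u‖) := by
      have he : (g u).re * (f u).re + (f u).re * (g u).re +
          ((g u).im * (f u).im + (f u).im * (g u).im)
          = 2 * (f u * (starRingEnd ℂ) (g u)).re := by
        simp only [Complex.mul_re, Complex.conj_re, Complex.conj_im]
        ring
      rw [he, abs_mul, abs_two]
      have h2 : |(f u * (starRingEnd ℂ) (g u)).re| ≤ ‖f u‖ * ‖g u‖ := by
        calc |(f u * (starRingEnd ℂ) (g u)).re| ≤ ‖f u * (starRingEnd ℂ) (g u)‖ :=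
              Complex.abs_re_le_norm _
          _ = ‖f u‖ * ‖g u‖ := by rw [norm_mul, RCLike.norm_conj]
      have h3 : ‖f u‖ * ‖g u‖ ≤ (Complex.normSq (f u) + ε) ^ ((1:ℝ)/2) * ‖g u‖ :=
        mul_le_mul_of_nonneg_right hfn (norm_nonneg _)
      linarith
    have hcoefnn : 0 ≤ r/2 * (Complex.normSq (f u) + ε) ^ (r/2 - 1) :=
      mul_nonneg (by linarith) (Real.rpow_nonneg (hNpos u).le _)
    have hpow : (Complex.normSq (f u) + ε) ^ (r/2 - 1) *
        (Complex.normSq (f u) + ε) ^ ((1:ℝ)/2) = (Complex.normSq (f u) + ε) ^ ((r-1)/2) := by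
      rw [← Real.rpow_add (hNpos u)]
      congr 1
      ring
    calc |r/2 * (Complex.normSq (f u) + ε) ^ (r/2 - 1) *
          ((g u).re * (f u).re + (f u).re * (g u).re +
            ((g u).im * (f u).im + (f u).im * (g u).im))|
        = (r/2 * (Complex.normSq (f u) + ε) ^ (r/2 - 1)) *
          |(g u).re * (f u).re + (f u).re * (g u).re +
            ((g u).im * (f u).im + (f u).im * (g u).im)| := by
          rw [abs_mul, abs_of_nonneg hcoefnn]
      _ ≤ (r/2 * (Complex.normSq (f u) + ε) ^ (r/2 - 1)) *
          (2 * ((Complex.normSq (f u) + ε) ^ ((1:ℝ)/2) * ‖g u‖)) :=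
          mul_le_mul_of_nonneg_left hgn hcoefnn
      _ = r * ((Complex.normSq (f u) + ε) ^ (r/2 - 1) *
            (Complex.normSq (f u) + ε) ^ ((1:ℝ)/2)) * ‖g u‖ := by ring
      _ = r * (Complex.normSq (f u) + ε) ^ ((r-1)/2) * ‖g u‖ := by rw [hpow]
  · -- B nonneg
    intro u
    exact mul_nonneg (mul_nonneg (by linarith) (Real.rpow_nonneg (hNpos u).le _)) (norm_nonneg _)

lemma core {r : ℝ} (hr : 1 ≤ r) {f g : ℝ → ℂ}
    (hd : ∀ t ∈ Icc (1:ℝ) 2, HasDerivWithinAt f (g t) (Icc (1:ℝ) 2) t)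
    (hgc : ContinuousOn g (Icc (1:ℝ) 2))
    {t s : ℝ} (ht : t ∈ Icc (1:ℝ) 2) (hs : s ∈ Icc (1:ℝ) 2) :
    ‖f t‖ ^ r ≤ ‖f s‖ ^ r + ∫ u in Icc (1:ℝ) 2, r * ‖f u‖ ^ (r-1) * ‖g u‖ := by
  have hfc : ContinuousOn f (Icc (1:ℝ) 2) := fun u hu => (hd u hu).continuousWithinAt
  have hεp : ∀ n : ℕ, (0:ℝ) < 1/(n+1) := fun n => by positivity
  have hbound : ∀ n : ℕ, ‖f t‖ ^ r ≤ (Complex.normSq (f s) + 1/(n+1)) ^ (r/2)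
      + ∫ u in Icc (1:ℝ) 2, r * (Complex.normSq (f u) + 1/(n+1)) ^ ((r-1)/2) * ‖g u‖ := by
    intro n
    refine le_trans ?_ (core_eps hr hd hgc (hεp n) ht hs)
    rw [← norm_rpow_eq]
    exact Real.rpow_le_rpow (Complex.normSq_nonneg _)
      (le_add_of_nonneg_right (hεp n).le) (by positivity)
  have htend0 : Tendsto (fun n : ℕ => 1/((n:ℝ)+1)) atTop (𝓝 0) :=
    tendsto_one_div_add_atTop_nhds_zero_nat
  have h1 : Tendsto (fun n : ℕ => (Complex.normSq (f s) + 1/((n:ℝ)+1)) ^ (r/2)) atTop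
      (𝓝 (‖f s‖ ^ r)) := by
    rw [← norm_rpow_eq]
    have h : Tendsto (fun n : ℕ => (Complex.normSq (f s) + 1/((n:ℝ)+1)) ^ (r/2)) atTop
        (𝓝 ((Complex.normSq (f s) + 0) ^ (r/2))) :=
      Tendsto.rpow_const (tendsto_const_nhds.add htend0) (Or.inr (by linarith))
    simpa using h
  have hNc : ContinuousOn (fun u => Complex.normSq (f u)) (Icc (1:ℝ) 2) :=
    Complex.continuous_normSq.comp_continuousOn hfc
  have h2 : Tendsto (fun n : ℕ => ∫ u in Icc (1:ℝ) 2,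
      r * (Complex.normSq (f u) + 1/((n:ℝ)+1)) ^ ((r-1)/2) * ‖g u‖) atTop
      (𝓝 (∫ u in Icc (1:ℝ) 2, r * ‖f u‖ ^ (r-1) * ‖g u‖)) := by
    refine tendsto_integral_of_dominated_convergence
      (fun u => r * (Complex.normSq (f u) + 1) ^ ((r-1)/2) * ‖g u‖) ?_ ?_ ?_ ?_
    · intro n
      exact ((continuousOn_const.mul ((hNc.add continuousOn_const).rpow_const
        fun u hu => Or.inr (by linarith))).mul hgc.norm).aestronglyMeasurable measurableSet_Icc
    · exact ((continuousOn_const.mul ((hNc.add continuousOn_const).rpow_const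
        fun u hu => Or.inr (by linarith))).mul hgc.norm).integrableOn_compact isCompact_Icc
    · intro n
      refine Filter.Eventually.of_forall fun u => ?_
      have hn1 : (1:ℝ)/((n:ℝ)+1) ≤ 1 := by
        rw [div_le_one (by positivity)]
        simp [Nat.cast_nonneg]
      have hNnn : (0:ℝ) ≤ Complex.normSq (f u) := Complex.normSq_nonneg _
      have hmono : (Complex.normSq (f u) + 1/((n:ℝ)+1)) ^ ((r-1)/2)
          ≤ (Complex.normSq (f u) + 1) ^ ((r-1)/2) :=
        Real.rpow_le_rpow (by positivity) (by linarith) (by linarith)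
      rw [Real.norm_eq_abs, abs_of_nonneg (mul_nonneg (mul_nonneg (by linarith)
        (Real.rpow_nonneg (by positivity) _)) (norm_nonneg _))]
      have hrn : (0:ℝ) ≤ r := by linarith
      nlinarith [norm_nonneg (g u), mul_le_mul_of_nonneg_right hmono (norm_nonneg (g u))]
    · refine Filter.Eventually.of_forall fun u => ?_
      have h3 : Complex.normSq (f u) ^ ((r-1)/2) = ‖f u‖ ^ (r-1) := norm_rpow_eq (f u) (r-1)
      have h : Tendsto (fun n : ℕ => (Complex.normSq (f u) + 1/((n:ℝ)+1)) ^ ((r-1)/2)) atTop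
          (𝓝 ((Complex.normSq (f u) + 0) ^ ((r-1)/2))) :=
        Tendsto.rpow_const (tendsto_const_nhds.add htend0) (Or.inr (by linarith))
      have h' := (h.const_mul r).mul_const ‖g u‖
      simpa [h3] using h'
  exact ge_of_tendsto (h1.add h2) (Filter.Eventually.of_forall hbound)

lemma avg {r : ℝ} (hr : 1 ≤ r) {f g : ℝ → ℂ}
    (hd : ∀ t ∈ Icc (1:ℝ) 2, HasDerivWithinAt f (g t) (Icc (1:ℝ) 2) t)
    (hgc : ContinuousOn g (Icc (1:ℝ) 2)) {t : ℝ} (ht : t ∈ Icc (1:ℝ) 2) :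
    ‖f t‖ ^ r ≤ (∫ s in Icc (1:ℝ) 2, ‖f s‖ ^ r)
      + ∫ u in Icc (1:ℝ) 2, r * ‖f u‖ ^ (r-1) * ‖g u‖ := by
  have hfc : ContinuousOn f (Icc (1:ℝ) 2) := fun u hu => (hd u hu).continuousWithinAt
  have h1 : ∀ s ∈ Icc (1:ℝ) 2,
      ‖f t‖ ^ r - (∫ u in Icc (1:ℝ) 2, r * ‖f u‖ ^ (r-1) * ‖g u‖) ≤ ‖f s‖ ^ r := by
    intro s hs
    have := core hr hd hgc ht hs
    linarith
  have hInt : IntegrableOn (fun s => ‖f s‖ ^ r) (Icc (1:ℝ) 2) volume :=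
    ((hfc.norm).rpow_const fun u hu => Or.inr (by positivity)).integrableOn_compact isCompact_Icc
  have h2 := setIntegral_mono_on (integrableOn_const
      (by rw [Real.volume_Icc]; norm_num)) hInt measurableSet_Icc h1
  rw [setIntegral_const, Real.volume_real_Icc] at h2
  norm_num at h2
  simpa using h2

lemma pt {r : ℝ} (hr : 1 ≤ r) {f g : ℝ → ℂ}
    (hd : ∀ t ∈ Icc (1:ℝ) 2, HasDerivWithinAt f (g t) (Icc (1:ℝ) 2) t)
    (hgc : ContinuousOn g (Icc (1:ℝ) 2)) :
    (⨆ t : (Icc (1:ℝ) 2), (‖f (t:ℝ)‖₊ : ℝ≥0∞)) ^ r ≤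
      (∫⁻ s in Icc (1:ℝ) 2, (‖f s‖₊ : ℝ≥0∞) ^ r)
      + ENNReal.ofReal r * ∫⁻ u in Icc (1:ℝ) 2, (‖f u‖₊ : ℝ≥0∞) ^ (r-1) * (‖g u‖₊ : ℝ≥0∞) := by
  have hr0 : (0:ℝ) < r := by linarith
  have hfc : ContinuousOn f (Icc (1:ℝ) 2) := fun u hu => (hd u hu).continuousWithinAt
  set RHS := (∫⁻ s in Icc (1:ℝ) 2, (‖f s‖₊ : ℝ≥0∞) ^ r)
      + ENNReal.ofReal r * ∫⁻ u in Icc (1:ℝ) 2, (‖f u‖₊ : ℝ≥0∞) ^ (r-1) * (‖g u‖₊ : ℝ≥0∞)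
    with hRHS
  have e1 : ∀ z : ℂ, (‖z‖₊ : ℝ≥0∞) ^ r = ENNReal.ofReal (‖z‖ ^ r) := fun z => by
    rw [← enorm_eq_nnnorm, ← ofReal_norm, ENNReal.ofReal_rpow_of_nonneg (norm_nonneg _) hr0.le]
  have e1' : ∀ z : ℂ, (‖z‖₊ : ℝ≥0∞) ^ (r-1) = ENNReal.ofReal (‖z‖ ^ (r-1)) := fun z => by
    rw [← enorm_eq_nnnorm, ← ofReal_norm, ENNReal.ofReal_rpow_of_nonneg (norm_nonneg _) (by linarith)]
  have hIntF : IntegrableOn (fun s => ‖f s‖ ^ r) (Icc (1:ℝ) 2) volume :=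
    ((hfc.norm).rpow_const fun u hu => Or.inr hr0.le).integrableOn_compact isCompact_Icc
  have hIntK : IntegrableOn (fun u => r * ‖f u‖ ^ (r-1) * ‖g u‖) (Icc (1:ℝ) 2) volume :=
    ((continuousOn_const.mul ((hfc.norm).rpow_const fun u hu => Or.inr (by linarith))).mul
      hgc.norm).integrableOn_compact isCompact_Icc
  have e2 : ENNReal.ofReal (∫ s in Icc (1:ℝ) 2, ‖f s‖ ^ r)
      = ∫⁻ s in Icc (1:ℝ) 2, (‖f s‖₊ : ℝ≥0∞) ^ r := by
    rw [MeasureTheory.ofReal_integral_eq_lintegral_ofReal hIntF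
      (Filter.Eventually.of_forall fun s => by positivity)]
    exact lintegral_congr fun s => (e1 (f s)).symm
  have e3 : ENNReal.ofReal (∫ u in Icc (1:ℝ) 2, r * ‖f u‖ ^ (r-1) * ‖g u‖)
      = ENNReal.ofReal r *
        ∫⁻ u in Icc (1:ℝ) 2, (‖f u‖₊ : ℝ≥0∞) ^ (r-1) * (‖g u‖₊ : ℝ≥0∞) := by
    rw [MeasureTheory.ofReal_integral_eq_lintegral_ofReal hIntK
      (Filter.Eventually.of_forall fun u => by positivity),
      ← lintegral_const_mul' (ENNReal.ofReal r) _ ENNReal.ofReal_ne_top]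
    refine lintegral_congr fun u => ?_
    rw [ENNReal.ofReal_mul (by positivity), ENNReal.ofReal_mul hr0.le,
      e1' (f u), ofReal_norm, enorm_eq_nnnorm, mul_assoc]
  have key : ∀ t : (Icc (1:ℝ) 2), (‖f (t:ℝ)‖₊ : ℝ≥0∞) ^ r ≤ RHS := by
    rintro ⟨t, ht⟩
    have havg := avg hr hd hgc ht
    calc (‖f t‖₊ : ℝ≥0∞) ^ r = ENNReal.ofReal (‖f t‖ ^ r) := e1 (f t)
      _ ≤ ENNReal.ofReal ((∫ s in Icc (1:ℝ) 2, ‖f s‖ ^ r)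
            + ∫ u in Icc (1:ℝ) 2, r * ‖f u‖ ^ (r-1) * ‖g u‖) :=
          ENNReal.ofReal_le_ofReal havg
      _ = ENNReal.ofReal (∫ s in Icc (1:ℝ) 2, ‖f s‖ ^ r)
            + ENNReal.ofReal (∫ u in Icc (1:ℝ) 2, r * ‖f u‖ ^ (r-1) * ‖g u‖) :=
          ENNReal.ofReal_add (integral_nonneg fun s => by positivity)
            (integral_nonneg fun u => by positivity)
      _ = RHS := by rw [e2, e3]
  have h4 : (⨆ t : (Icc (1:ℝ) 2), (‖f (t:ℝ)‖₊ : ℝ≥0∞)) ≤ RHS ^ (1/r) := by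
    refine iSup_le fun t => ?_
    have h := ENNReal.rpow_le_rpow (key t) (le_of_lt (by positivity : (0:ℝ) < 1/r))
    rw [one_div, ENNReal.rpow_rpow_inv hr0.ne'] at h
    rw [one_div]
    exact h
  calc (⨆ t : (Icc (1:ℝ) 2), (‖f (t:ℝ)‖₊ : ℝ≥0∞)) ^ r ≤ (RHS ^ (1/r)) ^ r :=
        ENNReal.rpow_le_rpow h4 hr0.le
    _ = RHS := by rw [one_div, ENNReal.rpow_inv_rpow hr0.ne']

end Stmt14Aux

/-- Sobolev-type maximal bound in t: for F continuously differentiable in t ∈ I = [1,2]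
with F, ∂_t F ∈ L^r(ℝ^d × I),
‖sup_{t∈I}|F(·,t)|‖_{L^r} ≤ C(‖F‖_{L^r} + ‖F‖_{L^r}^{(r−1)/r} ‖∂_t F‖_{L^r}^{1/r}). -/
theorem stmt14 (r : ℝ) (hr : 1 ≤ r) :
    ∃ C : ℝ, 0 < C ∧ ∀ (d : ℕ) (F G : EuclideanSpace ℝ (Fin d) → ℝ → ℂ),
      Measurable (Function.uncurry F) → Measurable (Function.uncurry G) →
      (∀ x, ∀ t ∈ Icc (1:ℝ) 2, HasDerivWithinAt (F x) (G x t) (Icc (1:ℝ) 2) t) →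
      (∀ x, ContinuousOn (G x) (Icc (1:ℝ) 2)) →
      (∫⁻ x, ∫⁻ t in Icc (1:ℝ) 2, (‖F x t‖₊ : ℝ≥0∞) ^ r) ≠ ⊤ →
      (∫⁻ x, ∫⁻ t in Icc (1:ℝ) 2, (‖G x t‖₊ : ℝ≥0∞) ^ r) ≠ ⊤ →
      (∫⁻ x, (⨆ t : (Icc (1:ℝ) 2), (‖F x (t:ℝ)‖₊ : ℝ≥0∞)) ^ r) ^ (1/r) ≤
        ENNReal.ofReal C *
          ((∫⁻ x, ∫⁻ t in Icc (1:ℝ) 2, (‖F x t‖₊ : ℝ≥0∞) ^ r) ^ (1/r) +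
            ((∫⁻ x, ∫⁻ t in Icc (1:ℝ) 2, (‖F x t‖₊ : ℝ≥0∞) ^ r) ^ (1/r)) ^ ((r-1)/r) *
              ((∫⁻ x, ∫⁻ t in Icc (1:ℝ) 2, (‖G x t‖₊ : ℝ≥0∞) ^ r) ^ (1/r)) ^ (1/r)) := by
  have hr0 : (0:ℝ) < r := by linarith
  refine ⟨2, by norm_num, ?_⟩
  intro d F G hF hG hderiv hGc hPfin hQfin
  set P := ∫⁻ x, ∫⁻ t in Icc (1:ℝ) 2, (‖F x t‖₊ : ℝ≥0∞) ^ r with hPdef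
  set Q := ∫⁻ x, ∫⁻ t in Icc (1:ℝ) 2, (‖G x t‖₊ : ℝ≥0∞) ^ r with hQdef
  -- measurability
  have hFm : Measurable fun p : EuclideanSpace ℝ (Fin d) × ℝ => (‖F p.1 p.2‖₊ : ℝ≥0∞) :=
    hF.enorm
  have hGm : Measurable fun p : EuclideanSpace ℝ (Fin d) × ℝ => (‖G p.1 p.2‖₊ : ℝ≥0∞) :=
    hG.enorm
  have hFr : Measurable fun p : EuclideanSpace ℝ (Fin d) × ℝ => (‖F p.1 p.2‖₊ : ℝ≥0∞) ^ r :=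
    hFm.pow_const r
  have hGr : Measurable fun p : EuclideanSpace ℝ (Fin d) × ℝ => (‖G p.1 p.2‖₊ : ℝ≥0∞) ^ r :=
    hGm.pow_const r
  have hmix : Measurable fun p : EuclideanSpace ℝ (Fin d) × ℝ =>
      (‖F p.1 p.2‖₊ : ℝ≥0∞) ^ (r-1) * (‖G p.1 p.2‖₊ : ℝ≥0∞) :=
    (hFm.pow_const (r-1)).mul hGm
  -- step 1
  have step1 : (∫⁻ x, (⨆ t : (Icc (1:ℝ) 2), (‖F x (t:ℝ)‖₊ : ℝ≥0∞)) ^ r) ≤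
      P + ENNReal.ofReal r *
        ∫⁻ x, ∫⁻ u in Icc (1:ℝ) 2, (‖F x u‖₊ : ℝ≥0∞) ^ (r-1) * (‖G x u‖₊ : ℝ≥0∞) := by
    calc (∫⁻ x, (⨆ t : (Icc (1:ℝ) 2), (‖F x (t:ℝ)‖₊ : ℝ≥0∞)) ^ r)
        ≤ ∫⁻ x, ((∫⁻ s in Icc (1:ℝ) 2, (‖F x s‖₊ : ℝ≥0∞) ^ r)
            + ENNReal.ofReal r *
              ∫⁻ u in Icc (1:ℝ) 2, (‖F x u‖₊ : ℝ≥0∞) ^ (r-1) * (‖G x u‖₊ : ℝ≥0∞)) :=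
          lintegral_mono fun x => Stmt14Aux.pt hr (hderiv x) (hGc x)
      _ = P + ∫⁻ x, ENNReal.ofReal r *
            ∫⁻ u in Icc (1:ℝ) 2, (‖F x u‖₊ : ℝ≥0∞) ^ (r-1) * (‖G x u‖₊ : ℝ≥0∞) :=
          lintegral_add_left (Measurable.lintegral_prod_right
            (f := fun x u => (‖F x u‖₊ : ℝ≥0∞) ^ r) hFr) _
      _ = P + ENNReal.ofReal r *
            ∫⁻ x, ∫⁻ u in Icc (1:ℝ) 2, (‖F x u‖₊ : ℝ≥0∞) ^ (r-1) * (‖G x u‖₊ : ℝ≥0∞) := by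
          rw [lintegral_const_mul' _ _ ENNReal.ofReal_ne_top]
  -- Hölder
  have holder : (∫⁻ x, ∫⁻ u in Icc (1:ℝ) 2, (‖F x u‖₊ : ℝ≥0∞) ^ (r-1) * (‖G x u‖₊ : ℝ≥0∞))
      ≤ P ^ ((r-1)/r) * Q ^ (1/r) := by
    set μ := (volume : Measure (EuclideanSpace ℝ (Fin d))).prod
      (volume.restrict (Icc (1:ℝ) 2)) with hμ
    have hiter : (∫⁻ x, ∫⁻ u in Icc (1:ℝ) 2, (‖F x u‖₊ : ℝ≥0∞) ^ (r-1) * (‖G x u‖₊ : ℝ≥0∞))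
        = ∫⁻ p, (‖F p.1 p.2‖₊ : ℝ≥0∞) ^ (r-1) * (‖G p.1 p.2‖₊ : ℝ≥0∞) ∂μ :=
      (lintegral_prod _ hmix.aemeasurable).symm
    have hPiter : P = ∫⁻ p, (‖F p.1 p.2‖₊ : ℝ≥0∞) ^ r ∂μ :=
      (lintegral_prod _ hFr.aemeasurable).symm
    have hQiter : Q = ∫⁻ p, (‖G p.1 p.2‖₊ : ℝ≥0∞) ^ r ∂μ :=
      (lintegral_prod _ hGr.aemeasurable).symm
    rcases eq_or_lt_of_le hr with heq | hlt
    · -- r = 1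
      rw [hiter, hPiter, hQiter, ← heq]
      simp only [sub_self, ENNReal.rpow_zero, one_mul, zero_div, ENNReal.rpow_one, div_one]
      simp [ENNReal.rpow_one]
    · -- r > 1
      have hr1 : (0:ℝ) < r - 1 := by linarith
      have hconj : Real.HolderConjugate (r/(r-1)) r := by
        rw [Real.holderConjugate_iff]
        constructor
        · rw [lt_div_iff₀ hr1]; linarith
        · field_simp; ring
      have hH := ENNReal.lintegral_mul_le_Lp_mul_Lq μ hconj
        ((hFm.pow_const (r-1)).aemeasurable) hGm.aemeasurable
      rw [hiter, hPiter, hQiter]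
      refine hH.trans (le_of_eq ?_)
      rw [one_div_div]
      congr 2
      apply lintegral_congr
      intro p
      rw [← ENNReal.rpow_mul]
      congr 1
      field_simp
  -- assembly
  have step2 : (∫⁻ x, (⨆ t : (Icc (1:ℝ) 2), (‖F x (t:ℝ)‖₊ : ℝ≥0∞)) ^ r) ≤
      P + ENNReal.ofReal r * (P ^ ((r-1)/r) * Q ^ (1/r)) :=
    step1.trans (add_le_add_right (mul_le_mul_right holder _) P)
  have step3 := ENNReal.rpow_le_rpow step2 (le_of_lt (by positivity : (0:ℝ) < 1/r))
  have split : (P + ENNReal.ofReal r * (P ^ ((r-1)/r) * Q ^ (1/r))) ^ (1/r)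
      ≤ P ^ (1/r) + (ENNReal.ofReal r * (P ^ ((r-1)/r) * Q ^ (1/r))) ^ (1/r) :=
    ENNReal.rpow_add_le_add_rpow _ _ (by positivity) (by rw [div_le_one hr0]; exact hr)
  have hcoef : (ENNReal.ofReal r) ^ (1/r) ≤ 2 := by
    have h2r : r ≤ (2:ℝ) ^ r := by
      have hb := one_add_mul_self_le_rpow_one_add (by norm_num : (-1:ℝ) ≤ 1) hr
      norm_num at hb
      linarith
    calc (ENNReal.ofReal r) ^ (1/r) ≤ (ENNReal.ofReal ((2:ℝ) ^ r)) ^ (1/r) :=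
          ENNReal.rpow_le_rpow (ENNReal.ofReal_le_ofReal h2r) (by positivity)
      _ = ENNReal.ofReal (((2:ℝ) ^ r) ^ (1/r)) := ENNReal.ofReal_rpow_of_pos (by positivity)
      _ = 2 := by
          rw [← Real.rpow_mul (by norm_num), mul_one_div, div_self hr0.ne', Real.rpow_one]
          norm_num
  have hsecond : (ENNReal.ofReal r * (P ^ ((r-1)/r) * Q ^ (1/r))) ^ (1/r)
      ≤ 2 * ((P ^ (1/r)) ^ ((r-1)/r) * (Q ^ (1/r)) ^ (1/r)) := by
    rw [ENNReal.mul_rpow_of_nonneg _ _ (by positivity : (0:ℝ) ≤ 1/r),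
      ENNReal.mul_rpow_of_nonneg _ _ (by positivity : (0:ℝ) ≤ 1/r)]
    have e1 : (P ^ ((r-1)/r)) ^ (1/r) = (P ^ (1/r)) ^ ((r-1)/r) := by
      rw [← ENNReal.rpow_mul, ← ENNReal.rpow_mul, mul_comm]
    have e2 : (Q ^ (1/r)) ^ (1/r) = (Q ^ (1/r)) ^ (1/r) := rfl
    rw [e1]
    exact mul_le_mul_left hcoef _
  calc (∫⁻ x, (⨆ t : (Icc (1:ℝ) 2), (‖F x (t:ℝ)‖₊ : ℝ≥0∞)) ^ r) ^ (1/r)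
      ≤ P ^ (1/r) + (ENNReal.ofReal r * (P ^ ((r-1)/r) * Q ^ (1/r))) ^ (1/r) :=
        step3.trans split
    _ ≤ P ^ (1/r) + 2 * ((P ^ (1/r)) ^ ((r-1)/r) * (Q ^ (1/r)) ^ (1/r)) :=
        add_le_add_right hsecond _
    _ ≤ 2 * (P ^ (1/r) + (P ^ (1/r)) ^ ((r-1)/r) * (Q ^ (1/r)) ^ (1/r)) := by
        rw [mul_add]
        exact add_le_add (le_mul_of_one_le_left' one_le_two) le_rfl
    _ = ENNReal.ofReal 2 * (P ^ (1/r) + (P ^ (1/r)) ^ ((r-1)/r) * (Q ^ (1/r)) ^ (1/r)) := by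
        norm_num
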